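/- arXiv:1306.1366 — 3 statements merged into one kernel-verified Lean document; each statement's English description precedes it below -/
import Mathlib

section
/- Every nonempty word W over a totally ordered alphabet has a unique factorization W = L_1 L_2 ... L_k into Lyndon words such that L_1 ≥_lex L_2 ≥_lex ... ≥_lex L_k. -/
/-- A Lyndon word: nonempty and strictly lexicographically smaller than
every proper cyclic rotation. -/
def IsLyndon {α : Type*} [LinearOrder α] (l : List α) : Prop :=
  l ≠ [] ∧ ∀ u v : List α, u ≠ [] → v ≠ [] → l = u ++ v → l < v ++ u

section Aux

variable {α : Type*} [LinearOrder α]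

lemma lt_iff' {l l' : List α} : l < l' ↔ List.Lex (· < ·) l l' := Iff.rfl

lemma lex_append_right' (u t : List α) (ht : t ≠ []) : u < u ++ t := by
  induction u with
  | nil => cases t with
    | nil => exact absurd rfl ht
    | cons a l => exact List.Lex.nil
  | cons a l ih => exact List.Lex.cons ih

lemma lt_of_proper_prefix {u v : List α} (h : u <+: v) (hne : u ≠ v) : u < v := by
  obtain ⟨t, rfl⟩ := h
  rcases List.eq_nil_or_concat t with rfl | _
  · simp at hne
  · exact lex_append_right' u t (by rintro rfl; simp at hne)

lemma le_of_prefix {u v : List α} (h : u <+: v) : u ≤ v := by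
  rcases eq_or_ne u v with rfl | hne
  · exact le_refl u
  · exact le_of_lt (lt_of_proper_prefix h hne)

lemma key_lemma {u v : List α} (h : u < v) : u <+: v ∨ ∀ s t : List α, u ++ s < v ++ t := by
  rw [lt_iff'] at h
  induction h with
  | nil => exact Or.inl (List.nil_prefix)
  | @rel a l b m hab => exact Or.inr fun s t => List.Lex.rel hab
  | @cons a l m hlm ih =>
    rcases ih with h | h
    · obtain ⟨t, rfl⟩ := h; exact Or.inl ⟨t, rfl⟩
    · exact Or.inr fun s t => List.Lex.cons (h s t)

lemma append_lt_append_left_iff (v : List α) {a b : List α} : v ++ a < v ++ b ↔ a < b := by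
  constructor
  · intro h
    induction v with
    | nil => exact h
    | cons x l ih =>
      rw [lt_iff'] at h
      cases h with
      | cons h => exact ih h
      | rel h => exact absurd h (lt_irrefl x)
  · intro h
    exact List.Lex.append_left _ h v

lemma lt_append_of_lt {u v : List α} (t : List α) (h : u < v) : u < v ++ t := by
  rcases key_lemma h with hp | hall
  · obtain ⟨r, rfl⟩ := hp
    have hr : r ≠ [] := by rintro rfl; simp at h
    rw [List.append_assoc]
    exact lex_append_right' u (r ++ t) (by simp [hr])
  · have := hall [] t
    simpa using this

/-- A Lyndon word is smaller than each of its proper nonempty suffixes. -/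
lemma lyndon_lt_suffix {u v : List α} (hw : IsLyndon (u ++ v)) (hu : u ≠ []) (hv : v ≠ []) :
    u ++ v < v := by
  by_contra hnot
  have h1 : u ++ v < v ++ u := hw.2 u v hu hv rfl
  have hvlt : v < u ++ v := by
    rcases lt_or_eq_of_le (not_lt.mp hnot) with h | h
    · exact h
    · exfalso
      have := congrArg List.length h
      simp at this
      exact hu this
  rcases key_lemma hvlt with hp | hall
  · obtain ⟨r, hr⟩ := hp
    have hrlen : r.length = u.length := by
      have := congrArg List.length hr; simp at this; omega
    have hrne : r ≠ [] := by
      rintro rfl; simp at hrlen; exact absurd (List.length_eq_zero_iff.mp hrlen.symm) hu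
    -- u ++ v = v ++ r
    have heq : u ++ v = v ++ r := hr.symm
    -- from h1 : v ++ r < v ++ u, cancel
    have hru : r < u := (append_lt_append_left_iff v).mp (heq ▸ h1)
    -- Lyndon split (v, r) : u ++ v < r ++ v
    have h2 : u ++ v < r ++ v := by
      have := hw.2 v r hv hrne heq
      exact this
    -- from r < u with equal lengths: r ++ v < u ++ v
    rcases key_lemma hru with hp2 | hall2
    · have : r = u := List.IsPrefix.eq_of_length hp2 hrlen
      subst this; exact lt_irrefl _ hru
    · exact absurd (hall2 v v) (lt_asymm h2)
  · have := hall u []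
    simp at this
    exact lt_asymm h1 this

/-- If `v` is Lyndon and `u < v`, `u ≠ []`, then `u ++ v < v`. -/
lemma append_lt_self {u v : List α} (hv : IsLyndon v) (hu : u ≠ []) (h : u < v) :
    u ++ v < v := by
  rcases key_lemma h with hp | hall
  · obtain ⟨r, rfl⟩ := hp
    have hrne : r ≠ [] := by rintro rfl; simp at h
    have hvr : u ++ r < r := lyndon_lt_suffix hv hu hrne
    exact (append_lt_append_left_iff u).mpr hvr
  · have := hall v []
    simpa using this


lemma lyndon_singleton (a : α) : IsLyndon [a] := by
  refine ⟨by simp, fun u v hu hv huv => ?_⟩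
  exfalso
  have := congrArg List.length huv
  simp at this
  rcases u with _ | ⟨x, u⟩; · exact hu rfl
  rcases v with _ | ⟨y, v⟩; · exact hv rfl
  simp at this; omega

lemma lyndon_merge {u v : List α} (hu : IsLyndon u) (hv : IsLyndon v) (h : u < v) :
    IsLyndon (u ++ v) := by
  refine ⟨by simp [hu.1], fun p q hp hq hpq => ?_⟩
  rcases lt_trichotomy p.length u.length with hlen | hlen | hlen
  · -- p is a proper prefix of u
    have hpu : p <+: u := List.prefix_of_prefix_length_le ⟨q, hpq.symm⟩ ⟨v, rfl⟩ (le_of_lt hlen)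
    obtain ⟨p', hp'⟩ := hpu
    have hp'ne : p' ≠ [] := by
      rintro rfl; simp at hp'; subst hp'; exact lt_irrefl _ hlen
    have hq' : q = p' ++ v := by
      have : p ++ (p' ++ v) = p ++ q := by rw [← List.append_assoc, hp']; exact hpq
      exact (List.append_cancel_left this).symm
    have hup' : u < p' := by
      rw [← hp']; exact lyndon_lt_suffix (by rw [hp']; exact hu) hp hp'ne
    rcases key_lemma hup' with hpre | hall
    · exfalso
      have h1 := hpre.length_le
      have h2 := congrArg List.length hp'; simp at h2
      have h3 : 0 < p.length := List.length_pos_iff.mpr hp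
      omega
    · rw [hq', List.append_assoc]
      exact hall v (v ++ p)
  · -- p = u, q = v
    have hpu : p = u := by
      have h1 : p <+: u := List.prefix_of_prefix_length_le ⟨q, hpq.symm⟩ ⟨v, rfl⟩ (le_of_eq hlen)
      exact h1.eq_of_length hlen
    subst hpu
    have hqv : q = v := List.append_cancel_left hpq.symm
    subst hqv
    exact lt_append_of_lt p (append_lt_self hv hu.1 h)
  · -- u is a proper prefix of p : p = u ++ v', v = v' ++ q
    have hup : u <+: p := List.prefix_of_prefix_length_le ⟨v, rfl⟩ ⟨q, hpq.symm⟩ (le_of_lt hlen)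
    obtain ⟨v', hv'⟩ := hup
    have hv'ne : v' ≠ [] := by
      rintro rfl; simp at hv'; subst hv'; exact lt_irrefl _ hlen
    have hvq : v = v' ++ q := by
      have : u ++ v = u ++ (v' ++ q) := by rw [← List.append_assoc, hv']; exact hpq
      exact List.append_cancel_left this
    have hvltq : v < q := by
      rw [hvq]; exact lyndon_lt_suffix (by rw [← hvq]; exact hv) hv'ne hq
    have h1 : u ++ v < v := append_lt_self hv hu.1 h
    have h2 : u ++ v < q := lt_trans h1 hvltq
    have := lt_append_of_lt p h2
    exact this

lemma not_chain'_decomp {β : Type*} (R : β → β → Prop) :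
    ∀ (F : List β), ¬ F.Chain' R → ∃ X a b Y, F = X ++ a :: b :: Y ∧ ¬ R a b
  | [], h => absurd List.isChain_nil h
  | [a], h => absurd (List.isChain_singleton a) h
  | a :: b :: T, h => by
    rw [List.Chain', List.isChain_cons_cons] at h
    push_neg at h
    by_cases hab : R a b
    · obtain ⟨X, x, y, Y, hXY, hxy⟩ := not_chain'_decomp R (b :: T) (h hab)
      exact ⟨a :: X, x, y, Y, by rw [List.cons_append, ← hXY], hxy⟩
    · exact ⟨[], a, b, T, rfl, hab⟩

lemma exists_fact : ∀ (n : ℕ) (F : List (List α)), F.length ≤ n → (∀ l ∈ F, IsLyndon l) →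
    ∃ G : List (List α), G.flatten = F.flatten ∧ (∀ l ∈ G, IsLyndon l) ∧ G.Chain' (· ≥ ·) := by
  intro n
  induction n with
  | zero =>
    intro F hF _
    have : F = [] := List.length_eq_zero_iff.mp (Nat.le_zero.mp hF)
    subst this
    exact ⟨[], rfl, by simp, List.isChain_nil⟩
  | succ n ih =>
    intro F hF hLyn
    by_cases hc : F.Chain' (· ≥ ·)
    · exact ⟨F, rfl, hLyn, hc⟩
    · obtain ⟨X, a, b, Y, rfl, hab⟩ := not_chain'_decomp _ F hc
      have hab' : a < b := lt_of_not_ge hab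
      have ha : IsLyndon a := hLyn a (by simp)
      have hb : IsLyndon b := hLyn b (by simp)
      have hmerge := lyndon_merge ha hb hab'
      have hlen : (X ++ (a ++ b) :: Y).length ≤ n := by
        have := hF; simp at this ⊢; omega
      have hLyn' : ∀ l ∈ X ++ (a ++ b) :: Y, IsLyndon l := by
        intro l hl
        simp at hl
        rcases hl with hl | rfl | hl
        · exact hLyn l (by simp [hl])
        · exact hmerge
        · exact hLyn l (by simp [hl])
      obtain ⟨G, hG1, hG2, hG3⟩ := ih _ hlen hLyn'
      refine ⟨G, ?_, hG2, hG3⟩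
      rw [hG1]; simp

lemma le_append_of_le {u v : List α} (t : List α) (h : u ≤ v) : u ≤ v ++ t := by
  rcases lt_or_eq_of_le h with h | rfl
  · exact le_of_lt (lt_append_of_lt t h)
  · exact le_of_prefix ⟨t, rfl⟩

/-- In a non-increasing Lyndon factorization, the last factor is ≤ every nonempty
suffix of the whole word. -/
lemma last_min_suffix : ∀ (F : List (List α)), (∀ l ∈ F, IsLyndon l) →
    F.Pairwise (· ≥ ·) → ∀ L, F.getLast? = some L →
    ∀ s : List α, s ≠ [] → s <:+ F.flatten → L ≤ s := by
  intro F
  induction F with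
  | nil => intro _ _ L hL; simp at hL
  | cons A F'' ih =>
    intro hLyn hPW L hL s hs hsuf
    rcases F'' with _ | ⟨B, T⟩
    · -- single element
      have hAL : A = L := by simpa using hL
      subst hAL
      simp at hsuf
      obtain ⟨u, hu⟩ := hsuf
      rcases eq_or_ne u [] with rfl | hune
      · simp at hu; subst hu; exact le_refl s
      · rw [← hu]
        exact le_of_lt (lyndon_lt_suffix (by rw [hu]; exact hLyn _ (by simp)) hune hs)
    · have hL' : (B :: T).getLast? = some L := by
        rw [List.getLast?_cons_cons] at hL
        exact hL
      have hLyn'' : ∀ l ∈ B :: T, IsLyndon l := fun l hl => hLyn l (List.mem_cons_of_mem _ hl)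
      have hPW'' : (B :: T).Pairwise (· ≥ ·) := hPW.of_cons
      have hAL : L ≤ A := by
        have hmem : L ∈ B :: T := by
          obtain ⟨h, rfl⟩ := List.mem_getLast?_eq_getLast hL'
          exact List.getLast_mem h
        exact (List.pairwise_cons.mp hPW).1 L hmem
      have hALyn : IsLyndon A := hLyn A (by simp)
      set W'' := (B :: T).flatten with hW''
      have hflat : (A :: B :: T).flatten = A ++ W'' := by simp [hW'']
      rw [hflat] at hsuf
      rcases le_or_gt s.length W''.length with hle | hgt
      · have hsW : s <:+ W'' :=
          List.suffix_of_suffix_length_le hsuf (List.suffix_append A W'') hle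
        exact ih hLyn'' hPW'' L hL' s hs hsW
      · have hWs : W'' <:+ s :=
          List.suffix_of_suffix_length_le (List.suffix_append A W'') hsuf (le_of_lt hgt)
        obtain ⟨v, hv⟩ := hWs
        have hvne : v ≠ [] := by
          rintro rfl; simp at hv; subst hv; exact lt_irrefl _ hgt
        have hvA : v <:+ A := by
          obtain ⟨t, ht⟩ := hsuf
          rw [← hv, ← List.append_assoc] at ht
          exact ⟨t, List.append_cancel_right ht⟩
        rcases eq_or_ne v A with rfl | hne
        · rw [← hv]
          exact le_append_of_le W'' hAL
        · obtain ⟨u, hu⟩ := hvA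
          have hune : u ≠ [] := by rintro rfl; simp at hu; exact hne hu
          have hAv : A < v := by
            rw [← hu]
            exact lyndon_lt_suffix (by rw [hu]; exact hALyn) hune hvne
          rw [← hv]
          exact le_of_lt (lt_append_of_lt W'' (lt_of_le_of_lt hAL hAv))

lemma flatten_eq_nil_of_lyndon {F : List (List α)} (hLyn : ∀ l ∈ F, IsLyndon l)
    (h : F.flatten = []) : F = [] := by
  cases F with
  | nil => rfl
  | cons A T =>
    exfalso
    simp at h
    exact (hLyn A (by simp)).1 h.1

lemma unique_fact : ∀ (n : ℕ) (W : List α), W.length ≤ n →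
    ∀ F G : List (List α), F.flatten = W → G.flatten = W →
    (∀ l ∈ F, IsLyndon l) → (∀ l ∈ G, IsLyndon l) →
    F.Pairwise (· ≥ ·) → G.Pairwise (· ≥ ·) → F = G := by
  intro n
  induction n with
  | zero =>
    intro W hW F G hF hG hLF hLG _ _
    have hWnil : W = [] := List.length_eq_zero_iff.mp (Nat.le_zero.mp hW)
    subst hWnil
    rw [flatten_eq_nil_of_lyndon hLF hF, flatten_eq_nil_of_lyndon hLG hG]
  | succ n ih =>
    intro W hW F G hF hG hLF hLG hPF hPG
    rcases eq_or_ne W [] with rfl | hWne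
    · rw [flatten_eq_nil_of_lyndon hLF hF, flatten_eq_nil_of_lyndon hLG hG]
    · rcases List.eq_nil_or_concat F with rfl | ⟨F', L, rfl⟩
      · exact absurd hF.symm hWne
      rcases List.eq_nil_or_concat G with rfl | ⟨G', M, rfl⟩
      · exact absurd hG.symm hWne
      simp only [List.concat_eq_append] at hF hG hLF hLG hPF hPG
      have hLlast : (F' ++ [L]).getLast? = some L := by
        simp [List.getLast?_concat]
      have hMlast : (G' ++ [M]).getLast? = some M := by
        simp [List.getLast?_concat]
      have hLne : L ≠ [] := (hLF L (by simp)).1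
      have hMne : M ≠ [] := (hLG M (by simp)).1
      have hLsuf : L <:+ W := by rw [← hF]; exact ⟨F'.flatten, by simp⟩
      have hMsuf : M <:+ W := by rw [← hG]; exact ⟨G'.flatten, by simp⟩
      have hLM : L ≤ M := by
        apply last_min_suffix (F' ++ [L]) hLF hPF L hLlast M hMne
        rw [hF]; exact hMsuf
      have hML : M ≤ L := by
        apply last_min_suffix (G' ++ [M]) hLG hPG M hMlast L hLne
        rw [hG]; exact hLsuf
      have hLMeq : L = M := le_antisymm hLM hML
      subst hLMeq
      have hflatF : F'.flatten ++ L = W := by rw [← hF]; simp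
      have hflatG : G'.flatten ++ L = W := by rw [← hG]; simp
      have hflatEq : F'.flatten = G'.flatten :=
        List.append_cancel_right (hflatF.trans hflatG.symm)
      have hlen : F'.flatten.length ≤ n := by
        have h1 := congrArg List.length hflatF
        simp only [List.length_append] at h1
        have h2 : 0 < L.length := List.length_pos_iff.mpr hLne
        omega
      have hF'G' : F' = G' := by
        apply ih F'.flatten hlen F' G' rfl hflatEq.symm
        · exact fun l hl => hLF l (by simp [hl])
        · exact fun l hl => hLG l (by simp [hl])
        · exact hPF.sublist (List.sublist_append_left F' [L])
        · exact hPG.sublist (List.sublist_append_left G' [L])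
      rw [hF'G']

end Aux

/-- Every nonempty word has a unique factorization into a non-increasing
sequence of Lyndon words. -/
theorem lyndon_factorization_exists_unique {α : Type*} [LinearOrder α]
    (W : List α) (hW : W ≠ []) :
    ∃! F : List (List α),
      F.flatten = W ∧ (∀ l ∈ F, IsLyndon l) ∧ F.Chain' (· ≥ ·) := by
  have hLyn0 : ∀ l ∈ W.map (fun a => [a]), IsLyndon l := by
    intro l hl
    simp only [List.mem_map] at hl
    obtain ⟨a, _, rfl⟩ := hl
    exact lyndon_singleton a
  have hflat0 : (W.map (fun a => [a])).flatten = W := by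
    clear hW hLyn0
    induction W with
    | nil => rfl
    | cons a l ih => simp [ih]
  obtain ⟨F, hF1, hF2, hF3⟩ := exists_fact (W.map fun a => [a]).length _ le_rfl hLyn0
  haveI : IsTrans (List α) (· ≥ ·) := ⟨fun a b c h1 h2 => le_trans h2 h1⟩
  refine ⟨F, ⟨hF1.trans hflat0, hF2, hF3⟩, ?_⟩
  rintro G ⟨hG1, hG2, hG3⟩
  exact unique_fact W.length W le_rfl G F hG1 (hF1.trans hflat0) hG2 hF2
    (List.isChain_iff_pairwise.mp hG3) (List.isChain_iff_pairwise.mp hF3)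
end

section
/- Let W be a word with Lyndon factorization W = L_1 L_2 ... L_k (each L_i a Lyndon word and L_1 ≥_lex ... ≥_lex L_k), and let u = L_r L_{r+1} ... L_s be a concatenation of consecutive Lyndon factors. Then for all positions i < j inside u, the local suffix of u starting at i is lexicographically smaller than the local suffix of u starting at j if and only if the global suffix of W starting at i is lexicographically smaller than the global suffix of W starting at j. (Compatibility of local and global suffix sorting.) -/
namespace LyndonAux

variable {α : Type*} [LinearOrder α]

lemma lt_iff_lex {x y : List α} : x < y ↔ List.Lex (· < ·) x y := Iff.rfl

/-- Monotonicity: a strict comparison witnessed by a genuine mismatch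
(no prefix relation) is preserved by appending anything on both sides. -/
lemma append_lt_append_of_lt_of_not_prefix {x y : List α} (h : x < y) (hp : ¬ x <+: y)
    (a b : List α) : x ++ a < y ++ b := by
  rw [lt_iff_lex] at h
  induction h with
  | nil => exact absurd (List.nil_prefix) hp
  | @rel c l₁ d l₂ hcd => exact List.Lex.rel hcd
  | @cons c l₁ l₂ h ih =>
      have hp' : ¬ l₁ <+: l₂ := fun hh => hp (List.cons_prefix_cons.mpr ⟨rfl, hh⟩)
      exact List.Lex.cons (ih hp')

lemma not_append_lt_self : ∀ (x t : List α), ¬ x ++ t < x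
  | [], t, h => List.not_lt_nil _ h
  | c :: x, t, h => by
      rw [lt_iff_lex] at h
      cases h with
      | rel h => exact absurd h (lt_irrefl c)
      | cons h => exact not_append_lt_self x t h

lemma prefix_le {x y : List α} (h : x <+: y) : x ≤ y := by
  obtain ⟨t, rfl⟩ := h
  exact not_lt.mp (not_append_lt_self x t)

lemma append_lt_append_left_iff : ∀ (x : List α) {a b : List α},
    x ++ a < x ++ b ↔ a < b
  | [], a, b => Iff.rfl
  | c :: x, a, b => by
      constructor
      · intro h
        rw [show (c :: x) ++ a = c :: (x ++ a) from rfl,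
          show (c :: x) ++ b = c :: (x ++ b) from rfl, lt_iff_lex] at h
        cases h with
        | rel h => exact absurd h (lt_irrefl c)
        | cons h => exact (append_lt_append_left_iff x).mp h
      · intro h
        exact List.Lex.cons ((append_lt_append_left_iff x).mpr h)

lemma append_le_append_left_iff (x : List α) {a b : List α} :
    x ++ a ≤ x ++ b ↔ a ≤ b := by
  rw [← not_lt, ← not_lt, append_lt_append_left_iff]

/-- Every proper nonempty suffix of a Lyndon word is strictly greater than it. -/
lemma lyndon_lt_suffix {L u s : List α} (hL : IsLyndon L) (hu : u ≠ []) (hs : s ≠ [])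
    (h : L = u ++ s) : L < s := by
  by_contra hns
  have hsL : s ≤ L := not_lt.mp hns
  have hlen : s.length < L.length := by
    have h5 := congrArg List.length h
    rw [List.length_append] at h5
    have : 0 < u.length := List.length_pos_iff.mpr hu
    omega
  have hne : s ≠ L := fun hh => by rw [hh] at hlen; omega
  have hslt : s < L := lt_of_le_of_ne hsL hne
  by_cases hpre : s <+: L
  · obtain ⟨w, hw⟩ := hpre
    have hwne : w ≠ [] := by
      rintro rfl
      simp at hw
      exact hne hw
    -- L < s ++ u  gives  w < u
    have h1 : L < s ++ u := hL.2 u s hu hs h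
    have h2 : s ++ w < s ++ u := by rw [hw]; exact h1
    have hwu : w < u := (append_lt_append_left_iff s).mp h2
    -- L < w ++ s  gives  u < w
    have h3 : L < w ++ s := hL.2 s w hs hwne hw.symm
    have h4 : u ++ s < w ++ s := h ▸ h3
    have hulenw : u.length = w.length := by
      have h5 := congrArg List.length h
      have h6 := congrArg List.length hw
      rw [List.length_append] at h5 h6
      omega
    have huw : u < w := by
      rcases lt_trichotomy u w with h5 | h5 | h5
      · exact h5
      · exact absurd h4 (by rw [h5]; exact lt_irrefl _)
      · have hnp : ¬ w <+: u := fun hh => by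
          have := hh.eq_of_length hulenw.symm
          exact absurd h5 (by rw [this]; exact lt_irrefl _)
        exact absurd h4 (lt_asymm (append_lt_append_of_lt_of_not_prefix h5 hnp s s))
    exact absurd hwu (lt_asymm huw)
  · have h1 : L < s ++ u := hL.2 u s hu hs h
    have h2 : s ++ u < L ++ [] := append_lt_append_of_lt_of_not_prefix hslt hpre u []
    rw [List.append_nil] at h2
    exact absurd h1 (lt_asymm h2)

lemma lyndon_le_suffix {L s : List α} (hL : IsLyndon L) (hs : s ≠ []) (hsuf : s <:+ L) :
    L ≤ s := by
  obtain ⟨u, hu⟩ := hsuf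
  rcases eq_or_ne u [] with rfl | hune
  · simp at hu
    exact le_of_eq hu.symm
  · exact le_of_lt (lyndon_lt_suffix hL hune hs hu.symm)

/-- Core lemma: if `s` is a nonempty suffix of a Lyndon word `L` dominating the
Lyndon chain `M`, then prepending `s` to `M.flatten` does not decrease it. -/
theorem core (M : List (List α)) (L s : List α) (hL : IsLyndon L)
    (hM : ∀ l ∈ M, IsLyndon l) (hc : List.Chain' (· ≥ ·) (L :: M))
    (hs : s ≠ []) (hsuf : s <:+ L) : M.flatten ≤ s ++ M.flatten := by
  match M with
  | [] => simp; exact prefix_le List.nil_prefix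
  | L' :: M' =>
    have hL' : IsLyndon L' := hM L' (by simp)
    have hM' : ∀ l ∈ M', IsLyndon l := fun l hl => hM l (by simp [hl])
    have hcc := List.isChain_cons_cons.mp hc
    have hL'L : L' ≤ L := hcc.1
    have hc' : List.Chain' (· ≥ ·) (L' :: M') := hcc.2
    have hLs : L ≤ s := lyndon_le_suffix hL hs hsuf
    by_cases hpre : L' <+: s
    · obtain ⟨z, hz⟩ := hpre
      rcases eq_or_ne z [] with rfl | hzne
      · -- s = L'
        have hsL' : s = L' := by simpa using hz.symm
        have ih : M'.flatten ≤ L' ++ M'.flatten :=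
          core M' L' L' hL' hM' hc' hL'.1 (List.suffix_refl _)
        calc (L' :: M').flatten = L' ++ M'.flatten := by simp
          _ ≤ L' ++ (L' ++ M'.flatten) := (append_le_append_left_iff L').mpr ih
          _ = s ++ (L' :: M').flatten := by simp [hsL']
      · -- s = L' ++ z with z a shorter nonempty suffix of L
        have hzsuf : z <:+ L := List.IsSuffix.trans ⟨L', hz⟩ hsuf
        have hzlen : z.length < s.length := by
          have h1 := congrArg List.length hz
          rw [List.length_append] at h1
          have h2 : 0 < L'.length := List.length_pos_iff.mpr hL'.1
          omega
        have c1 : (L' :: M').flatten ≤ z ++ (L' :: M').flatten :=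
          core (L' :: M') L z hL hM hc hzne hzsuf
        have c2 : M'.flatten ≤ L' ++ M'.flatten :=
          core M' L' L' hL' hM' hc' hL'.1 (List.suffix_refl _)
        calc (L' :: M').flatten = L' ++ M'.flatten := by simp
          _ ≤ L' ++ (z ++ (L' ++ M'.flatten)) := by
              refine (append_le_append_left_iff L').mpr ?_
              calc M'.flatten ≤ L' ++ M'.flatten := c2
                _ = (L' :: M').flatten := by simp
                _ ≤ z ++ (L' :: M').flatten := c1
                _ = z ++ (L' ++ M'.flatten) := by simp
          _ = s ++ (L' :: M').flatten := by simp [← hz]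
    · have hL's : L' < s := by
        refine lt_of_le_of_ne (le_trans hL'L hLs) ?_
        rintro rfl
        exact hpre (List.prefix_refl _)
      have : L' ++ M'.flatten < s ++ (L' ++ M'.flatten) :=
        append_lt_append_of_lt_of_not_prefix hL's hpre M'.flatten (L' ++ M'.flatten)
      simpa using le_of_lt this
termination_by (M.length, s.length)

/-- The suffix of the factorized word starting at a factor boundary is lexicographically
minimal among all suffixes starting at earlier positions. -/
theorem key : ∀ (B C : List (List α)), (∀ l ∈ B ++ C, IsLyndon l) →
    List.Chain' (· ≥ ·) (B ++ C) →
    ∀ q, q ≤ B.flatten.length → C.flatten ≤ ((B ++ C).flatten).drop q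
  | [], C, _, _, q, hq => by
      simp at hq
      simp [hq]
  | L :: B', C, hLy, hc, q, hq => by
      have hL : IsLyndon L := hLy L (by simp)
      have hrest : ∀ l ∈ B' ++ C, IsLyndon l := fun l hl => hLy l (by simp [hl])
      have hc' : List.Chain' (· ≥ ·) (B' ++ C) := hc.tail
      have hflat : ((L :: B') ++ C).flatten = L ++ (B' ++ C).flatten := by simp
      by_cases hqL : L.length ≤ q
      · have hq' : q - L.length ≤ B'.flatten.length := by
          have : (L :: B').flatten.length = L.length + B'.flatten.length := by simp
          omega
        have := key B' C hrest hc' (q - L.length) hq'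
        rw [hflat, List.drop_append, List.drop_eq_nil_of_le hqL,
          List.nil_append]
        exact this
      · push_neg at hqL
        set s := L.drop q with hsdef
        have hsne : s ≠ [] := by
          intro hh
          have := congrArg List.length hh
          rw [hsdef, List.length_drop] at this
          simp at this
          omega
        have hssuf : s <:+ L := List.drop_suffix q L
        have h0 : C.flatten ≤ (B' ++ C).flatten := by
          simpa using key B' C hrest hc' 0 (Nat.zero_le _)
        have h1 : (B' ++ C).flatten ≤ s ++ (B' ++ C).flatten :=
          core (B' ++ C) L s hL hrest hc hsne hssuf
        rw [hflat, List.drop_append_of_le_length (le_of_lt hqL)]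
        exact le_trans h0 h1

end LyndonAux

/-- Compatibility of local and global suffix sorting: if
`W = (A ++ B ++ C).flatten` is the Lyndon factorization of `W` and
`u = B.flatten` is a concatenation of consecutive Lyndon factors, then for
positions `i < j` inside `u`, the local suffixes (suffixes of the prefix
`A.flatten ++ B.flatten` of `W`) compare the same way as the global suffixes. -/
theorem local_global_suffix_compatible {α : Type*} [LinearOrder α]
    (A B C : List (List α))
    (hLy : ∀ l ∈ A ++ B ++ C, IsLyndon l)
    (hchain : (A ++ B ++ C).Chain' (· ≥ ·))
    (i j : ℕ) (hij : i < j)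
    (hi : A.flatten.length ≤ i) (hj : j < A.flatten.length + B.flatten.length) :
    (A.flatten ++ B.flatten).drop i < (A.flatten ++ B.flatten).drop j ↔
      (A ++ B ++ C).flatten.drop i < (A ++ B ++ C).flatten.drop j := by
  classical
  set P : List α := A.flatten ++ B.flatten with hP
  set T : List α := C.flatten with hT
  have hPlen : P.length = A.flatten.length + B.flatten.length := by simp [hP]
  have hjP : j ≤ P.length := by omega
  have hiP : i ≤ P.length := by omega
  have hW : (A ++ B ++ C).flatten = P ++ T := by simp [hP, hT]
  have hdi : (A ++ B ++ C).flatten.drop i = P.drop i ++ T := by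
    rw [hW, List.drop_append_of_le_length hiP]
  have hdj : (A ++ B ++ C).flatten.drop j = P.drop j ++ T := by
    rw [hW, List.drop_append_of_le_length hjP]
  rw [hdi, hdj]
  set x : List α := P.drop i with hx
  set y : List α := P.drop j with hy
  have hxlen : x.length = P.length - i := List.length_drop
  have hylen : y.length = P.length - j := List.length_drop
  have hxy : y.length < x.length := by omega
  by_cases hyx : y <+: x
  · -- y is a proper prefix of x : both comparisons are false
    obtain ⟨rest, hrest⟩ := hyx
    have hrest' : rest = x.drop y.length := by
      rw [← hrest, List.drop_left]
    -- identify rest as a suffix of B.flatten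
    have hrest2 : rest = B.flatten.drop (i + (P.length - j) - A.flatten.length) := by
      rw [hrest', hx, hylen, List.drop_drop, hP, List.drop_append,
        List.drop_eq_nil_of_le (by omega), List.nil_append]
    have hq : i + (P.length - j) - A.flatten.length ≤ B.flatten.length := by omega
    have hBC_Ly : ∀ l ∈ B ++ C, IsLyndon l := fun l hl => hLy l (by
      simp only [List.append_assoc, List.mem_append] at hl ⊢
      tauto)
    have hBC_chain : List.Chain' (· ≥ ·) (B ++ C) := by
      rw [List.append_assoc] at hchain
      exact hchain.sublist (List.sublist_append_right A (B ++ C))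
    have hkey : T ≤ rest ++ T := by
      have hk := LyndonAux.key B C hBC_Ly hBC_chain _ hq
      rw [List.flatten_append, List.drop_append,
        Nat.sub_eq_zero_of_le hq, List.drop_zero] at hk
      rw [hrest2]
      exact hk
    have hne : y ≠ x := by
      intro hh
      rw [hh] at hxy
      omega
    have hylt : y < x := lt_of_le_of_ne (LyndonAux.prefix_le ⟨rest, hrest⟩) hne
    refine iff_of_false (lt_asymm hylt) ?_
    rw [← hrest, List.append_assoc, LyndonAux.append_lt_append_left_iff]
    exact not_lt.mpr hkey
  · rcases lt_trichotomy x y with hlt | heq | hgt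
    · have hnp : ¬ x <+: y := fun hh => by
        have := hh.length_le
        omega
      exact iff_of_true hlt (LyndonAux.append_lt_append_of_lt_of_not_prefix hlt hnp T T)
    · exfalso
      rw [heq] at hxy
      omega
    · have hright : y ++ T < x ++ T :=
        LyndonAux.append_lt_append_of_lt_of_not_prefix hgt hyx T T
      exact iff_of_false (lt_asymm hgt) (lt_asymm hright)
end

section
/- Let two suffixes of W start at positions i < j, both inside u = L_r...L_s (consecutive Lyndon factors of the Lyndon factorization of W). If the local suffix suf_u(j) is a prefix of the local suffix suf_u(i), then the global suffix suf_W(i) is strictly lexicographically greater than the global suffix suf_W(j). -/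
namespace LyndonAux

open List

variable {α : Type*} [LinearOrder α]

theorem lex_nil {y : List α} (h : y ≠ []) : List.Lex (· < ·) [] y := by
  cases y with
  | nil => exact absurd rfl h
  | cons a l => exact List.Lex.nil

theorem lex_of_cons_lex {a : α} {x y : List α}
    (h : List.Lex (· < ·) (a :: x) (a :: y)) : List.Lex (· < ·) x y := by
  cases h with
  | cons h => exact h
  | rel h => exact absurd h (lt_irrefl a)

theorem lex_cancel_left : ∀ (c : List α) {x y : List α},
    List.Lex (· < ·) (c ++ x) (c ++ y) → List.Lex (· < ·) x y
  | [], _, _, h => h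
  | a :: c, x, y, h => lex_cancel_left c (lex_of_cons_lex h)

theorem lex_trans {x y z : List α} (h1 : List.Lex (· < ·) x y)
    (h2 : List.Lex (· < ·) y z) : List.Lex (· < ·) x z :=
  (lt_trans (show x < y from h1) (show y < z from h2) : x < z)

/-- If `x < y` with a strict letter difference (not via prefix), appending
anything preserves strictness. -/
theorem lex_strict_append : ∀ {x y : List α}, List.Lex (· < ·) x y → ¬ x <+: y →
    ∀ (a b : List α), List.Lex (· < ·) (x ++ a) (y ++ b)
  | [], _, _, hp, _, _ => absurd (List.nil_prefix) hp
  | _ :: _, _ :: _, List.Lex.rel h, _, _, _ => List.Lex.rel h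
  | x0 :: x, _ :: y, List.Lex.cons h, hp, a, b =>
      List.Lex.cons (lex_strict_append h
        (fun hxy => hp (List.cons_prefix_cons.mpr ⟨rfl, hxy⟩)) a b)

theorem lex_of_lex_append : ∀ {x y : List α} (w : List α),
    List.Lex (· < ·) x (y ++ w) → ¬ y <+: x → List.Lex (· < ·) x y
  | _, [], _, _, hp => absurd (List.nil_prefix) hp
  | [], _ :: _, _, _, _ => List.Lex.nil
  | a :: x, y0 :: y, w, h, hp => by
      cases h with
      | rel h => exact List.Lex.rel h
      | cons h =>
          exact List.Lex.cons (lex_of_lex_append w h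
            (fun hxy => hp (List.cons_prefix_cons.mpr ⟨rfl, hxy⟩)))

/-- Key transfer lemma: if `z < N ++ t` and `N < R` with a strict letter
difference, then `z < R ++ w` for every `w`. -/
theorem lex_trans_strict : ∀ {N R z t w : List α},
    List.Lex (· < ·) z (N ++ t) → List.Lex (· < ·) N R → ¬ N <+: R →
    List.Lex (· < ·) z (R ++ w)
  | [], _, _, _, _, _, _, hp => absurd (List.nil_prefix) hp
  | _ :: _, [], _, _, _, _, h2, _ => absurd h2 (by intro h; cases h)
  | _ :: _, _ :: _, [], _, _, _, _, _ => List.Lex.nil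
  | n :: N, r :: R, a :: z, t, w, h1, h2, hp => by
      cases h1 with
      | rel h1 =>
          cases h2 with
          | rel h2 => exact List.Lex.rel (lt_trans h1 h2)
          | cons h2 => exact List.Lex.rel h1
      | cons h1 =>
          cases h2 with
          | rel h2 => exact List.Lex.rel h2
          | cons h2 =>
              exact List.Lex.cons (lex_trans_strict h1 h2
                (fun hxy => hp (List.cons_prefix_cons.mpr ⟨rfl, hxy⟩)))

/-- A proper nonempty suffix of a Lyndon word is strictly greater, with a
strict letter difference. -/
theorem lyndon_suffix {N M R : List α} (hN : IsLyndon N) (hMR : N = M ++ R)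
    (hM : M ≠ []) (hR : R ≠ []) : List.Lex (· < ·) N R ∧ ¬ N <+: R := by
  have hMpos : 0 < M.length := List.length_pos_iff.mpr hM
  have hlen : R.length < N.length := by
    rw [hMR, List.length_append]; omega
  have hnp : ¬ N <+: R := fun h => absurd h.length_le (not_le.mpr hlen)
  have h1 : List.Lex (· < ·) N (R ++ M) := hN.2 M R hM hR hMR
  by_cases hrp : R <+: N
  · exfalso
    obtain ⟨S, hS⟩ := hrp
    have hSne : S ≠ [] := by
      intro h
      rw [h, List.append_nil] at hS
      rw [hS] at hlen
      exact lt_irrefl _ hlen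
    have h2 : List.Lex (· < ·) N (S ++ R) := hN.2 R S hR hSne hS.symm
    have h3 : List.Lex (· < ·) S M := by
      apply lex_cancel_left R
      rw [hS, ← hMR] at *
      exact h1
    have hlenSM : S.length = M.length := by
      have e1 := congrArg List.length hS
      have e2 := congrArg List.length hMR
      simp only [List.length_append] at e1 e2
      omega
    have hnsp : ¬ S <+: M := by
      intro h
      have : S = M := h.eq_of_length hlenSM
      rw [this] at h3
      exact lt_irrefl M (show M < M from h3)
    have h4 : List.Lex (· < ·) (S ++ R) (M ++ R) := lex_strict_append h3 hnsp R R
    rw [← hMR] at h4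
    exact lt_irrefl N (lt_trans (show N < S ++ R from h2) (show S ++ R < N from h4))
  · exact ⟨lex_of_lex_append M h1 hrp, hnp⟩

/-- Core growth lemma: if every block of `ML` is `≤ N` (a Lyndon word), then
`ML.flatten < N ++ ML.flatten ++ w` for every `w`. -/
theorem flatten_lt (N : List α) (hN : IsLyndon N) :
    ∀ (ML : List (List α)), (∀ X ∈ ML, X ≤ N) → ∀ (w : List α),
      List.Lex (· < ·) ML.flatten (N ++ (ML.flatten ++ w))
  | [], _, w => by
      simp only [List.flatten_nil, List.nil_append]
      exact lex_nil (fun h => hN.1 (List.append_eq_nil_iff.mp h).1)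
  | M :: rest, hle, w => by
      have hM : M ≤ N := hle M List.mem_cons_self
      have IH := flatten_lt N hN rest (fun X hX => hle X (List.mem_cons_of_mem _ hX))
      simp only [List.flatten_cons]
      by_cases hp : M <+: N
      · obtain ⟨R, hR⟩ := hp
        rcases eq_or_ne R [] with rfl | hRne
        · rw [List.append_nil] at hR
          subst hR
          have h := List.Lex.append_left (· < ·) (IH w) M
          simpa only [List.append_assoc] using h
        · rcases eq_or_ne M [] with rfl | hMne
          · simp only [List.nil_append] at hR ⊢
            subst hR
            exact IH w
          · have hA := lyndon_suffix hN hR.symm hMne hRne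
            have h2 : List.Lex (· < ·) rest.flatten
                (R ++ ((M ++ rest.flatten) ++ w)) :=
              lex_trans_strict (IH w) hA.1 hA.2
            have h3 := List.Lex.append_left (· < ·) h2 M
            rw [← List.append_assoc, hR] at h3
            simpa only [List.append_assoc] using h3
      · have hne : M ≠ N := fun h => hp (h ▸ List.prefix_refl M)
        have hlt : List.Lex (· < ·) M N := (lt_of_le_of_ne hM hne : M < N)
        exact lex_strict_append hlt hp _ _

/-- Dropping leading factors strictly decreases the flattening. -/
theorem tail_lt : ∀ (ML₁ ML₂ : List (List α)), ML₁ ≠ [] →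
    (∀ X ∈ ML₁, IsLyndon X) → List.Pairwise (· ≥ ·) (ML₁ ++ ML₂) →
    ∀ (w : List α),
      List.Lex (· < ·) ML₂.flatten (ML₁.flatten ++ (ML₂.flatten ++ w))
  | [], _, h, _, _, _ => absurd rfl h
  | N :: rest, ML₂, _, hLy, hpw, w => by
      have hNLy : IsLyndon N := hLy N List.mem_cons_self
      have hpw' : List.Pairwise (· ≥ ·) (N :: (rest ++ ML₂)) := by
        simpa using hpw
      have hNle : ∀ X ∈ rest ++ ML₂, X ≤ N :=
        fun X hX => (List.pairwise_cons.mp hpw').1 X hX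
      rcases eq_or_ne rest [] with rfl | hr
      · have := flatten_lt N hNLy ML₂
          (fun X hX => hNle X (by simpa using hX)) w
        simpa using this
      · have h1 := tail_lt rest ML₂ hr
          (fun X hX => hLy X (List.mem_cons_of_mem _ hX))
          ((List.pairwise_cons.mp hpw').2) []
        rw [List.append_nil] at h1
        have h2 := flatten_lt N hNLy (rest ++ ML₂) hNle w
        rw [List.flatten_append] at h2
        refine lex_trans h1 ?_
        simpa only [List.flatten_cons, List.append_assoc] using h2

/-- Decomposition of a nonempty suffix of a flattening. -/
theorem suffix_decomp : ∀ (B : List (List α)) (t : List α),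
    t <:+ B.flatten → t ≠ [] →
    ∃ M B₂ v, (M :: B₂) <:+ B ∧ v <:+ M ∧ v ≠ [] ∧ t = v ++ B₂.flatten
  | [], t, ht, htne => by
      simp only [List.flatten_nil, List.suffix_nil] at ht
      exact absurd ht htne
  | M₀ :: B', t, ht, htne => by
      rw [List.flatten_cons] at ht
      obtain ⟨s, hs⟩ := ht
      by_cases hsl : M₀.length ≤ s.length
      · have hdrop : t = (M₀ ++ B'.flatten).drop s.length := by
          rw [← hs, List.drop_left]
        have : t = B'.flatten.drop (s.length - M₀.length) := by
          rw [hdrop, show s.length = M₀.length + (s.length - M₀.length) by omega,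
            List.drop_length_add_append]
          congr 1
          omega
        have htB' : t <:+ B'.flatten := this ▸ List.drop_suffix _ _
        obtain ⟨M, B₂, v, h1, h2, h3, h4⟩ := suffix_decomp B' t htB' htne
        exact ⟨M, B₂, v, h1.trans (List.suffix_cons M₀ B'), h2, h3, h4⟩
      · have hsp : s <+: M₀ := by
          apply List.prefix_of_prefix_length_le (l₃ := M₀ ++ B'.flatten)
          · exact ⟨t, hs⟩
          · exact List.prefix_append M₀ B'.flatten
          · omega
        obtain ⟨v, hv⟩ := hsp
        have hteq : t = v ++ B'.flatten := by
          have : s ++ t = s ++ (v ++ B'.flatten) := by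
            rw [← List.append_assoc, hv, hs]
          exact List.append_cancel_left this
        have hvne : v ≠ [] := by
          intro h
          rw [h, List.append_nil] at hv
          rw [hv] at hsl
          omega
        exact ⟨M₀, B', v, List.suffix_refl _, ⟨s, hv⟩, hvne, hteq⟩

/-- Main combinatorial lemma: a nonempty suffix `t` of `B.flatten` satisfies
`C.flatten < t ++ C.flatten`. -/
theorem main_lemma (B C : List (List α)) (hLy : ∀ l ∈ B ++ C, IsLyndon l)
    (hpw : List.Pairwise (· ≥ ·) (B ++ C)) (t : List α)
    (ht : t <:+ B.flatten) (htne : t ≠ []) :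
    List.Lex (· < ·) C.flatten (t ++ C.flatten) := by
  obtain ⟨M, B₂, v, hsuf, hvM, hvne, rfl⟩ := suffix_decomp B t ht htne
  have hsub : ((M :: B₂) ++ C) <+ (B ++ C) :=
    List.Sublist.append_right hsuf.sublist C
  have hpw' : List.Pairwise (· ≥ ·) ((M :: B₂) ++ C) := hpw.sublist hsub
  have hLy' : ∀ l ∈ (M :: B₂) ++ C, IsLyndon l := fun l hl => hLy l (hsub.subset hl)
  have hMLy : IsLyndon M := hLy' M (by simp)
  rcases eq_or_ne v M with rfl | hvne2
  · have h := tail_lt (v :: B₂) C (List.cons_ne_nil _ _)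
      (fun X hX => hLy' X (List.mem_append_left _ hX)) hpw' []
    rw [List.append_nil] at h
    simpa only [List.flatten_cons, List.append_assoc] using h
  · obtain ⟨M₁, hM₁⟩ := hvM
    have hM₁ne : M₁ ≠ [] := by
      intro h
      rw [h, List.nil_append] at hM₁
      exact hvne2 hM₁
    have hA := lyndon_suffix hMLy hM₁.symm hM₁ne hvne
    have hCle : ∀ X ∈ C, X ≤ M := by
      have hpc : List.Pairwise (· ≥ ·) (M :: (B₂ ++ C)) := by simpa using hpw'
      exact fun X hX => (List.pairwise_cons.mp hpc).1 X (List.mem_append_right _ hX)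
    have hF := flatten_lt M hMLy C hCle []
    have h := lex_trans_strict (w := B₂.flatten ++ C.flatten) hF hA.1 hA.2
    simpa only [List.append_assoc] using h

end LyndonAux

/-- If the local suffix at `j` is a prefix of the local suffix at `i`
(positions `i < j` inside a block of consecutive Lyndon factors), then the
global suffix at `i` is strictly greater than the global suffix at `j`. -/
theorem global_gt_of_local_prefix {α : Type*} [LinearOrder α]
    (A B C : List (List α))
    (hLy : ∀ l ∈ A ++ B ++ C, IsLyndon l)
    (hchain : (A ++ B ++ C).Chain' (· ≥ ·))
    (i j : ℕ) (hij : i < j)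
    (hi : A.flatten.length ≤ i) (hj : j < A.flatten.length + B.flatten.length)
    (hpre : (A.flatten ++ B.flatten).drop j <+: (A.flatten ++ B.flatten).drop i) :
    (A ++ B ++ C).flatten.drop j < (A ++ B ++ C).flatten.drop i := by
  classical
  set P := A.flatten ++ B.flatten with hP
  have hflat : (A ++ B ++ C).flatten = P ++ C.flatten := by
    simp [hP, List.flatten_append]
  have hjP : j ≤ P.length := by
    simp only [hP, List.length_append]; omega
  have hiP : i ≤ P.length := le_of_lt (lt_of_lt_of_le hij hjP)
  obtain ⟨t, ht⟩ := hpre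
  have hlent : t.length = j - i := by
    have := congrArg List.length ht
    simp only [List.length_append, List.length_drop] at this
    omega
  have htne : t ≠ [] := by
    intro h
    rw [h] at hlent
    simp only [List.length_nil] at hlent
    omega
  have htsufP : t <:+ P := List.IsSuffix.trans ⟨P.drop j, ht⟩ (List.drop_suffix i P)
  have htB : t <:+ B.flatten := by
    have h1 : t.reverse <+: P.reverse := List.reverse_prefix.mpr htsufP
    have h2 : B.flatten.reverse <+: P.reverse :=
      List.reverse_prefix.mpr ⟨A.flatten, rfl⟩
    have hle : t.reverse.length ≤ B.flatten.reverse.length := by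
      simp only [List.length_reverse, hlent]; omega
    exact List.reverse_prefix.mp (List.prefix_of_prefix_length_le h1 h2 hle)
  -- restrict hypotheses to B ++ C
  have hassoc : A ++ B ++ C = A ++ (B ++ C) := by rw [List.append_assoc]
  have hLyBC : ∀ l ∈ B ++ C, IsLyndon l := fun l hl =>
    hLy l (by rw [hassoc]; exact List.mem_append_right A hl)
  have hpwBC : List.Pairwise (· ≥ ·) (B ++ C) := by
    have hpwAll : List.Pairwise (· ≥ ·) (A ++ B ++ C) :=
      List.isChain_iff_pairwise.mp hchain
    refine hpwAll.sublist ?_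
    rw [hassoc]
    exact List.sublist_append_right A (B ++ C)
  have hmain := LyndonAux.main_lemma B C hLyBC hpwBC t htB htne
  -- compute the drops
  have hdropj : (A ++ B ++ C).flatten.drop j = P.drop j ++ C.flatten := by
    rw [hflat, List.drop_append, Nat.sub_eq_zero_of_le hjP,
      List.drop_zero]
  have hdropi : (A ++ B ++ C).flatten.drop i = P.drop i ++ C.flatten := by
    rw [hflat, List.drop_append, Nat.sub_eq_zero_of_le hiP,
      List.drop_zero]
  rw [hdropj, hdropi, ← ht, List.append_assoc]
  exact (List.Lex.append_left (· < ·) hmain (P.drop j) :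
    P.drop j ++ C.flatten < P.drop j ++ (t ++ C.flatten))
end
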